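/- Let 𝐩 = (p_h)_{h∈I} be a finite family of [0,1]-valued random variables which is strong PRDS on a subset I' ⊆ I: for every h ∈ I' and every measurable nondecreasing set D ⊆ [0,1]^I, u ↦ P(𝐩 ∈ D | p_h = u) is (a.s. equal to) a nondecreasing function of u. Then 𝐩 is weak PRDS on I': for every h ∈ I' and measurable nondecreasing D, u ↦ P(𝐩 ∈ D | p_h ≤ u) is nondecreasing on {u : P(p_h ≤ u) > 0}. -/

import Mathlib

open MeasureTheory Set

/-- Strong PRDS implies weak PRDS for a finite family of p-values: if for every `h ∈ I'`
and every measurable nondecreasing set `D ⊆ [0,1]^I` the conditional probability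
`P(𝐩 ∈ D | p_h = u)` agrees a.s. with a nondecreasing function of `u`, then
`u ↦ P(𝐩 ∈ D | p_h ≤ u)` is nondecreasing on `{u : P(p_h ≤ u) > 0}`. -/
theorem strong_PRDS_implies_weak_PRDS
    {Ω : Type*} [MeasurableSpace Ω] (P : Measure Ω) [IsProbabilityMeasure P]
    {I : Type*} [Fintype I] (I' : Set I)
    (p : Ω → I → ℝ) (hp : Measurable p) (hp01 : ∀ ω i, p ω i ∈ Icc (0:ℝ) 1)
    (hstrong : ∀ h ∈ I', ∀ D : Set (I → ℝ), MeasurableSet D → IsUpperSet D →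
      ∃ g : ℝ → ℝ, Monotone g ∧
        (fun ω => g (p ω h))
          =ᵐ[P] P[ (fun ω => D.indicator (fun _ => (1:ℝ)) (p ω)) |
                    MeasurableSpace.comap (fun ω => p ω h) inferInstance ]) :
    ∀ h ∈ I', ∀ D : Set (I → ℝ), MeasurableSet D → IsUpperSet D →
      ∀ u u' : ℝ, u ≤ u' → 0 < P {ω | p ω h ≤ u} →
        P ({ω | p ω ∈ D} ∩ {ω | p ω h ≤ u}) / P {ω | p ω h ≤ u}
          ≤ P ({ω | p ω ∈ D} ∩ {ω | p ω h ≤ u'}) / P {ω | p ω h ≤ u'} := by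
  intro h hh D hD hup u u' huu' hpos
  obtain ⟨g, hg, hgae⟩ := hstrong h hh D hD hup
  have hph : Measurable (fun ω => p ω h) := (measurable_pi_apply h).comp hp
  have hm := hph.comap_le
  set f : Ω → ℝ := fun ω => D.indicator (fun _ => (1:ℝ)) (p ω) with hf_def
  have hf_eq : f = (p ⁻¹' D).indicator (fun _ => (1:ℝ)) := by
    ext ω; by_cases hω : p ω ∈ D <;> simp [hf_def, indicator, hω]
  have hf_int : Integrable f P := by
    rw [hf_eq]; exact (integrable_const (1:ℝ)).indicator (hp hD)
  haveI : SigmaFinite (P.trim hm) := ⟨⟨fun _ => Set.univ, fun _ => trivial,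
    fun _ => by rw [trim_measurableSet_eq hm MeasurableSet.univ]; exact measure_lt_top _ _,
    iUnion_const _⟩⟩
  have hgint : Integrable (fun ω => g (p ω h)) P :=
    integrable_condExp.congr hgae.symm
  set A : Set Ω := {ω | p ω h ≤ u} with hA_def
  set B : Set Ω := {ω | p ω h ≤ u'} with hB_def
  have hAB : A ⊆ B := fun ω hω => le_trans hω huu'
  have hA_m : MeasurableSet[MeasurableSpace.comap (fun ω => p ω h) inferInstance] A := ⟨Iic u, measurableSet_Iic, rfl⟩
  have hB_m : MeasurableSet[MeasurableSpace.comap (fun ω => p ω h) inferInstance] B := ⟨Iic u', measurableSet_Iic, rfl⟩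
  have hA_meas : MeasurableSet A := hm A hA_m
  have hB_meas : MeasurableSet B := hm B hB_m
  -- integral of f over a set in m equals integral of g(p · h)
  have key : ∀ S : Set Ω, MeasurableSet[MeasurableSpace.comap (fun ω => p ω h) inferInstance] S →
      ∫ ω in S, f ω ∂P = ∫ ω in S, g (p ω h) ∂P := by
    intro S hS
    rw [← setIntegral_condExp hm hf_int hS]
    exact (integral_congr_ae (ae_restrict_of_ae hgae)).symm
  -- integral of f over S equals measure of D ∩ S
  have keyf : ∀ S : Set Ω, MeasurableSet S →
      ∫ ω in S, f ω ∂P = (P ({ω | p ω ∈ D} ∩ S)).toReal := by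
    intro S hS
    rw [hf_eq, setIntegral_indicator (hp hD)]
    rw [setIntegral_const, smul_eq_mul, mul_one, Set.inter_comm]
    rfl
  set a := (P ({ω | p ω ∈ D} ∩ A)).toReal with ha_def
  set c := (P ({ω | p ω ∈ D} ∩ B)).toReal with hc_def
  set α := (P A).toReal with hα_def
  set γ := (P B).toReal with hγ_def
  set β := (P (B \ A)).toReal with hβ_def
  have hαpos : 0 < α := ENNReal.toReal_pos hpos.ne' (measure_ne_top _ _)
  have hγpos : 0 < γ := lt_of_lt_of_le hαpos
    (ENNReal.toReal_le_toReal (measure_ne_top _ _) (measure_ne_top _ _) |>.mpr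
      (measure_mono hAB))
  have hβnn : 0 ≤ β := ENNReal.toReal_nonneg
  have hγ_split : γ = α + β := by
    rw [hα_def, hβ_def, hγ_def, ← ENNReal.toReal_add (measure_ne_top _ _) (measure_ne_top _ _)]
    congr 1
    rw [← measure_union (disjoint_sdiff_right) (hB_meas.diff hA_meas),
      Set.union_diff_cancel hAB]
  have ha_eq : a = ∫ ω in A, g (p ω h) ∂P := by
    rw [← key A hA_m, keyf A hA_meas]
  -- split ∫_B g = ∫_A g + ∫_{B\A} g
  have hBA_m : MeasurableSet[MeasurableSpace.comap (fun ω => p ω h) inferInstance] (B \ A) := hB_m.diff hA_m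
  have hc_eqB : c = ∫ ω in B, g (p ω h) ∂P := by
    rw [← key B hB_m, keyf B hB_meas]
  have hsplit : ∫ ω in B, g (p ω h) ∂P
      = (∫ ω in A, g (p ω h) ∂P) + ∫ ω in B \ A, g (p ω h) ∂P := by
    have := setIntegral_union (f := fun ω => g (p ω h)) (μ := P) disjoint_sdiff_right
      (hB_meas.diff hA_meas) hgint.integrableOn hgint.integrableOn
    rwa [Set.union_diff_cancel hAB] at this
  have hc_eq : c = (∫ ω in A, g (p ω h) ∂P) + ∫ ω in B \ A, g (p ω h) ∂P :=
    hc_eqB.trans hsplit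
  -- bounds
  have hbound1 : ∫ ω in A, g (p ω h) ∂P ≤ g u * α := by
    calc ∫ ω in A, g (p ω h) ∂P ≤ ∫ _ in A, g u ∂P := by
          refine setIntegral_mono_on hgint.integrableOn (integrableOn_const
            (measure_ne_top _ _)) hA_meas ?_
          intro ω hω; exact hg hω
      _ = g u * α := by rw [setIntegral_const, smul_eq_mul, mul_comm]; rfl
  have hbound2 : g u * β ≤ ∫ ω in B \ A, g (p ω h) ∂P := by
    calc g u * β = ∫ _ in B \ A, g u ∂P := by
          rw [setIntegral_const, smul_eq_mul, mul_comm]; rfl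
      _ ≤ ∫ ω in B \ A, g (p ω h) ∂P := by
          refine setIntegral_mono_on (integrableOn_const
            (measure_ne_top _ _)) hgint.integrableOn (hB_meas.diff hA_meas) ?_
          intro ω hω; exact hg (le_of_lt (lt_of_not_ge hω.2))
  have hann : 0 ≤ a := ENNReal.toReal_nonneg
  have key_real : a / α ≤ c / γ := by
    rw [div_le_div_iff₀ hαpos hγpos]
    have h1 : a * β ≤ g u * α * β := by nlinarith [ha_eq ▸ hbound1]
    have h2 : g u * β * α ≤ (∫ ω in B \ A, g (p ω h) ∂P) * α := by
      nlinarith [hbound2]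
    have ha' : a ≤ g u * α := ha_eq ▸ hbound1
    nlinarith [hγ_split, hc_eq, ha_eq]
  -- convert to ENNReal
  have hfin1 : P ({ω | p ω ∈ D} ∩ A) / P A ≠ ⊤ :=
    (ENNReal.div_lt_top (measure_ne_top _ _) hpos.ne').ne
  have hfin2 : P ({ω | p ω ∈ D} ∩ B) / P B ≠ ⊤ :=
    (ENNReal.div_lt_top (measure_ne_top _ _)
      (lt_of_lt_of_le hpos (measure_mono hAB)).ne').ne
  rw [← ENNReal.toReal_le_toReal hfin1 hfin2, ENNReal.toReal_div, ENNReal.toReal_div]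
  exact key_real
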